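/- Let ρ₁, ρ₂ be density matrices on a finite-dimensional Hilbert space H, let K be a Hilbert space with dim K ≥ dim H, and let |φ₁⟩, |φ₂⟩ ∈ H ⊗ K be purifications of ρ₁, ρ₂ respectively. Then there exists a unitary U on K such that, setting |φ₂'⟩ = (I ⊗ U)|φ₂⟩, we have ‖|φ₁⟩⟨φ₁| − |φ₂'⟩⟨φ₂'|‖₁ ≤ 2·‖ρ₁ − ρ₂‖₁^(1/2). -/

import Mathlib

set_option linter.unusedSectionVars false
set_option maxHeartbeats 1000000


open scoped ComplexOrder

/-- The trace norm `‖A‖₁ = Tr √(AᴴA)` of a complex matrix. -/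
noncomputable def traceNorm {n : Type*} [Fintype n] [DecidableEq n] (A : Matrix n n ℂ) : ℝ :=
  (((Matrix.posSemidef_conjTranspose_mul_self A).1.eigenvectorUnitary : Matrix n n ℂ) *
      Matrix.diagonal (fun i => ((Real.sqrt
        ((Matrix.posSemidef_conjTranspose_mul_self A).1.eigenvalues i) : ℝ) : ℂ)) *
      (star (Matrix.posSemidef_conjTranspose_mul_self A).1.eigenvectorUnitary :
        Matrix n n ℂ)).trace.re

/-- The rank-one projection `|φ⟩⟨φ|` associated to a vector `φ`. -/
def outer {m : Type*} [Fintype m] (φ : EuclideanSpace ℂ m) : Matrix m m ℂ :=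
  Matrix.of fun i j => φ i * star (φ j)

/-- The reduced density matrix on `H` of a vector `φ ∈ H ⊗ K` (partial trace over `K`). -/
noncomputable def reducedH {dH dK : ℕ} (φ : EuclideanSpace ℂ (Fin dH × Fin dK)) :
    Matrix (Fin dH) (Fin dH) ℂ :=
  Matrix.of fun i i' => ∑ j, φ (i, j) * star (φ (i', j))

/-- The action of `I ⊗ U` on a vector of `H ⊗ K`, for a matrix `U` acting on `K`. -/
noncomputable def applyOnK {dH dK : ℕ} (U : Matrix (Fin dK) (Fin dK) ℂ)
    (φ : EuclideanSpace ℂ (Fin dH × Fin dK)) : EuclideanSpace ℂ (Fin dH × Fin dK) :=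
  WithLp.toLp 2 fun p : Fin dH × Fin dK => ∑ j', U p.2 j' * φ (p.1, j')

/-- Square root of a positive semidefinite matrix (spectral definition). -/
noncomputable def Matrix.PosSemidef.sqrt {n : Type*} [Fintype n] [DecidableEq n]
    {A : Matrix n n ℂ} (hA : A.PosSemidef) : Matrix n n ℂ :=
  (hA.1.eigenvectorUnitary : Matrix n n ℂ) *
    Matrix.diagonal (fun i => ((Real.sqrt (hA.1.eigenvalues i) : ℝ) : ℂ)) *
    (star hA.1.eigenvectorUnitary : Matrix n n ℂ)

lemma Matrix.PosSemidef.posSemidef_sqrt {n : Type*} [Fintype n] [DecidableEq n]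
    {A : Matrix n n ℂ} (hA : A.PosSemidef) : hA.sqrt.PosSemidef := by
  have hd : (Matrix.diagonal (fun i => ((Real.sqrt (hA.1.eigenvalues i) : ℝ) : ℂ))).PosSemidef :=
    Matrix.posSemidef_diagonal_iff.mpr fun i => Complex.zero_le_real.mpr (Real.sqrt_nonneg _)
  have := hd.mul_mul_conjTranspose_same (hA.1.eigenvectorUnitary : Matrix n n ℂ)
  rwa [← Matrix.star_eq_conjTranspose] at this

lemma Matrix.PosSemidef.sqrt_mul_self {n : Type*} [Fintype n] [DecidableEq n]
    {A : Matrix n n ℂ} (hA : A.PosSemidef) : hA.sqrt * hA.sqrt = A := by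
  have hU : (star hA.1.eigenvectorUnitary : Matrix n n ℂ) * (hA.1.eigenvectorUnitary : Matrix n n ℂ)
      = 1 := Unitary.coe_star_mul_self _
  have hD : Matrix.diagonal (fun i => ((Real.sqrt (hA.1.eigenvalues i) : ℝ) : ℂ)) *
      Matrix.diagonal (fun i => ((Real.sqrt (hA.1.eigenvalues i) : ℝ) : ℂ))
      = Matrix.diagonal (RCLike.ofReal ∘ hA.1.eigenvalues) := by
    rw [Matrix.diagonal_mul_diagonal]
    congr 1
    funext i
    simp only [Function.comp_apply, ← Complex.ofReal_mul,
      Real.mul_self_sqrt (hA.eigenvalues_nonneg i)]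
    rfl
  conv_rhs => rw [hA.1.spectral_theorem, Unitary.conjStarAlgAut_apply]
  unfold Matrix.PosSemidef.sqrt
  calc _ = (hA.1.eigenvectorUnitary : Matrix n n ℂ) *
        (Matrix.diagonal (fun i => ((Real.sqrt (hA.1.eigenvalues i) : ℝ) : ℂ)) *
        ((star hA.1.eigenvectorUnitary : Matrix n n ℂ) * (hA.1.eigenvectorUnitary : Matrix n n ℂ)) *
        Matrix.diagonal (fun i => ((Real.sqrt (hA.1.eigenvalues i) : ℝ) : ℂ))) *
        (star hA.1.eigenvectorUnitary : Matrix n n ℂ) := by simp only [Matrix.mul_assoc]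
    _ = _ := by rw [hU, Matrix.mul_one, hD]

/-! ### Auxiliary material -/

open Matrix

noncomputable section LT_Aux

namespace LTaux

variable {m k : Type*} [Fintype m] [Fintype k] [DecidableEq m] [DecidableEq k]

lemma inner_toEuclideanLin_conjTranspose (A : Matrix m k ℂ)
    (x y : EuclideanSpace ℂ m) :
    (inner ℂ (Matrix.toEuclideanLin Aᴴ x) (Matrix.toEuclideanLin Aᴴ y) : ℂ)
      = star (x : m → ℂ) ⬝ᵥ (A * Aᴴ) *ᵥ (y : m → ℂ) := by
  have : ∀ z : EuclideanSpace ℂ m,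
      (Matrix.toEuclideanLin Aᴴ z : k → ℂ) = Aᴴ *ᵥ (z : m → ℂ) := fun z => rfl
  simp only [PiLp.inner_apply, RCLike.inner_apply'] at *
  calc (∑ j, (starRingEnd ℂ) ((Matrix.toEuclideanLin Aᴴ x) j) * (Matrix.toEuclideanLin Aᴴ y) j)
      = star (Aᴴ *ᵥ (x : m → ℂ)) ⬝ᵥ (Aᴴ *ᵥ (y : m → ℂ)) := by
        rw [this x, this y]; rfl
    _ = (star (x : m → ℂ) ᵥ* (Aᴴ)ᴴ) ⬝ᵥ (Aᴴ *ᵥ (y : m → ℂ)) := by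
        rw [Matrix.star_mulVec]
    _ = star (x : m → ℂ) ⬝ᵥ (A * Aᴴ) *ᵥ (y : m → ℂ) := by
        rw [← dotProduct_mulVec, Matrix.mulVec_mulVec, conjTranspose_conjTranspose]

/-- Unitary freedom in Gram factorizations: if `A₁A₁ᴴ = A₂A₂ᴴ` then `A₂ U = A₁` for a unitary. -/
lemma exists_unitary_mul_eq (A₁ A₂ : Matrix m k ℂ)
    (h : A₁ * A₁ᴴ = A₂ * A₂ᴴ) :
    ∃ U ∈ Matrix.unitaryGroup k ℂ, A₂ * U = A₁ := by
  set T₁ := Matrix.toEuclideanLin A₁ᴴ with hT₁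
  set T₂ := Matrix.toEuclideanLin A₂ᴴ with hT₂
  have hinner : ∀ x y, (inner ℂ (T₁ x) (T₁ y) : ℂ) = inner ℂ (T₂ x) (T₂ y) := by
    intro x y
    rw [hT₁, hT₂, inner_toEuclideanLin_conjTranspose, inner_toEuclideanLin_conjTranspose, h]
  have hnorm : ∀ x, ‖T₁ x‖ = ‖T₂ x‖ := by
    intro x
    have h1 := norm_sq_eq_re_inner (𝕜 := ℂ) (T₁ x)
    have h2 := norm_sq_eq_re_inner (𝕜 := ℂ) (T₂ x)
    rw [hinner x x] at h1
    have h3 : ‖T₁ x‖ ^ 2 = ‖T₂ x‖ ^ 2 := h1.trans h2.symm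
    nlinarith [norm_nonneg (T₁ x), norm_nonneg (T₂ x)]
  have hker : LinearMap.ker T₂ ≤ LinearMap.ker T₁ := by
    intro x hx
    rw [LinearMap.mem_ker] at hx ⊢
    have := hnorm x
    rw [hx, norm_zero, norm_eq_zero] at this
    exact this
  set f₀ : (EuclideanSpace ℂ m ⧸ LinearMap.ker T₂) →ₗ[ℂ] EuclideanSpace ℂ k :=
    (LinearMap.ker T₂).liftQ T₁ hker with hf₀
  set e := T₂.quotKerEquivRange with he
  set fLin : (LinearMap.range T₂ : Submodule ℂ (EuclideanSpace ℂ k)) →ₗ[ℂ]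
      EuclideanSpace ℂ k := f₀ ∘ₗ (e.symm : _ →ₗ[ℂ] _) with hfLin
  have hfapp : ∀ x : EuclideanSpace ℂ m,
      fLin ⟨T₂ x, LinearMap.mem_range_self T₂ x⟩ = T₁ x := by
    intro x
    have h1 : e.symm ⟨T₂ x, LinearMap.mem_range_self T₂ x⟩ = Submodule.Quotient.mk x := by
      rw [LinearEquiv.symm_apply_eq]
      exact Subtype.ext (T₂.quotKerEquivRange_apply_mk x).symm
    rw [hfLin]
    simp only [LinearMap.coe_comp, Function.comp_apply, LinearEquiv.coe_coe, h1, hf₀]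
    exact Submodule.liftQ_apply _ T₁ x
  have hfnorm : ∀ s : (LinearMap.range T₂ : Submodule ℂ (EuclideanSpace ℂ k)),
      ‖fLin s‖ = ‖s‖ := by
    rintro ⟨s, hs⟩
    obtain ⟨x, rfl⟩ := hs
    rw [hfapp x, hnorm x]
    rfl
  set f : (LinearMap.range T₂ : Submodule ℂ (EuclideanSpace ℂ k)) →ₗᵢ[ℂ]
      EuclideanSpace ℂ k := ⟨fLin, hfnorm⟩ with hf
  set L := f.extend with hL
  have hLT : ∀ x, L (T₂ x) = T₁ x := by
    intro x
    have : L (T₂ x) = L ((⟨T₂ x, LinearMap.mem_range_self T₂ x⟩ :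
        (LinearMap.range T₂ : Submodule ℂ (EuclideanSpace ℂ k)))) := rfl
    rw [this, LinearIsometry.extend_apply]
    exact hfapp x
  set U : Matrix k k ℂ := Matrix.toEuclideanLin.symm L.toLinearMap with hU
  have hUapp : ∀ x, Matrix.toEuclideanLin U x = L x := by
    intro x; rw [hU, LinearEquiv.apply_symm_apply]; rfl
  have hUmv : ∀ x : k → ℂ, U *ᵥ x = (L ((WithLp.equiv 2 _).symm x) : k → ℂ) := by
    intro x
    have := hUapp ((WithLp.equiv 2 (k → ℂ)).symm x)
    rw [Matrix.toEuclideanLin_apply] at this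
    have := congrArg (WithLp.equiv 2 (k → ℂ)) this
    simpa using this
  have hUcol : ∀ a : k, (fun j => U j a) = (L (EuclideanSpace.single a 1) : k → ℂ) := by
    intro a
    have := hUmv (Pi.single a 1)
    rw [Matrix.mulVec_single] at this
    simp at this
    exact this
  have hUunit : U ∈ Matrix.unitaryGroup k ℂ := by
    rw [Matrix.mem_unitaryGroup_iff']
    ext a b
    have h1 : (star U * U) a b = ∑ j, star (U j a) * U j b := by
      simp [Matrix.mul_apply, Matrix.star_apply]
    have h2 : (inner ℂ (L (EuclideanSpace.single a 1)) (L (EuclideanSpace.single b 1)) : ℂ)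
        = ∑ j, star (U j a) * U j b := by
      rw [PiLp.inner_apply]
      refine Finset.sum_congr rfl fun j _ => ?_
      rw [congrFun (hUcol a) j, congrFun (hUcol b) j]
      exact RCLike.inner_apply' _ _
    rw [h1, ← h2, LinearIsometry.inner_map_map, EuclideanSpace.inner_single_left]
    simp [EuclideanSpace.single_apply, Matrix.one_apply, eq_comm]
  refine ⟨star U, Unitary.star_mem hUunit, ?_⟩
  have hcol : U * A₂ᴴ = A₁ᴴ := by
    ext j i
    have h1 : (U * A₂ᴴ) j i = (U *ᵥ fun j' => A₂ᴴ j' i) j := by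
      simp [Matrix.mul_apply, Matrix.mulVec, dotProduct]
    have h2 : (fun j' => A₂ᴴ j' i) = (T₂ ((WithLp.equiv 2 (m → ℂ)).symm (Pi.single i 1)) :
        k → ℂ) := by
      have : (T₂ ((WithLp.equiv 2 (m → ℂ)).symm (Pi.single i 1)) : k → ℂ)
          = A₂ᴴ *ᵥ Pi.single i 1 := rfl
      rw [this, Matrix.mulVec_single]
      simp
      rfl
    rw [h1, hUmv]
    have h3 : ((WithLp.equiv 2 (k → ℂ)).symm fun j' => A₂ᴴ j' i)
        = T₂ ((WithLp.equiv 2 (m → ℂ)).symm (Pi.single i 1)) := by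
      rw [h2]; rfl
    rw [h3, hLT]
    have : (T₁ ((WithLp.equiv 2 (m → ℂ)).symm (Pi.single i 1)) : k → ℂ)
        = A₁ᴴ *ᵥ Pi.single i 1 := rfl
    rw [this, Matrix.mulVec_single]
    simp
  calc A₂ * star U = (U * A₂ᴴ)ᴴ := by
        rw [Matrix.conjTranspose_mul, conjTranspose_conjTranspose]; rfl
    _ = A₁ᴴᴴ := by rw [hcol]
    _ = A₁ := conjTranspose_conjTranspose A₁

variable {n : Type*} [Fintype n] [DecidableEq n]

lemma psd_diag_re_nonneg {A : Matrix n n ℂ} (hA : A.PosSemidef) (i : n) : 0 ≤ (A i i).re := by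
  have := hA.re_dotProduct_nonneg (Pi.single i 1)
  simpa [dotProduct, Matrix.mulVec, Pi.single_apply, Finset.sum_ite_eq,
    Finset.sum_ite_eq'] using this

lemma psd_trace_re_nonneg {A : Matrix n n ℂ} (hA : A.PosSemidef) : 0 ≤ A.trace.re := by
  rw [Matrix.trace, Complex.re_sum]
  exact Finset.sum_nonneg fun i _ => psd_diag_re_nonneg hA i

lemma traceNorm_nonneg (A : Matrix n n ℂ) : 0 ≤ traceNorm A :=
  psd_trace_re_nonneg (Matrix.posSemidef_conjTranspose_mul_self A).posSemidef_sqrt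

/-- Polar decomposition. -/
lemma exists_polar (X : Matrix n n ℂ) :
    ∃ W ∈ Matrix.unitaryGroup n ℂ,
      X = W * (Matrix.posSemidef_conjTranspose_mul_self X).sqrt := by
  set S := (Matrix.posSemidef_conjTranspose_mul_self X).sqrt with hS
  have hSpsd : S.PosSemidef := (Matrix.posSemidef_conjTranspose_mul_self X).posSemidef_sqrt
  have h : Xᴴ * Xᴴᴴ = S * Sᴴ := by
    rw [conjTranspose_conjTranspose, hSpsd.1, hS,
      (Matrix.posSemidef_conjTranspose_mul_self X).sqrt_mul_self]
  obtain ⟨U, hU, hSU⟩ := exists_unitary_mul_eq Xᴴ S h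
  refine ⟨star U, Unitary.star_mem hU, ?_⟩
  have := congrArg Matrix.conjTranspose hSU
  rw [Matrix.conjTranspose_mul, conjTranspose_conjTranspose, hSpsd.1] at this
  rw [← this]
  rfl

/-- Cauchy–Schwarz for the Frobenius inner ℂ product. -/
lemma abs_trace_conjTranspose_mul_le (A B : Matrix n n ℂ) :
    ‖(Aᴴ * B).trace‖
      ≤ Real.sqrt ((Aᴴ * A).trace.re) * Real.sqrt ((Bᴴ * B).trace.re) := by
  set a : EuclideanSpace ℂ (n × n) := (WithLp.equiv 2 _).symm (fun p : n × n => A p.1 p.2) with ha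
  set b : EuclideanSpace ℂ (n × n) := (WithLp.equiv 2 _).symm (fun p : n × n => B p.1 p.2) with hb
  have key : ∀ (M N : Matrix n n ℂ), (Mᴴ * N).trace
      = (inner ℂ ((WithLp.equiv 2 ((_ : n × n) → ℂ)).symm (fun p : n × n => M p.1 p.2))
          ((WithLp.equiv 2 ((_ : n × n) → ℂ)).symm (fun p : n × n => N p.1 p.2)) : ℂ) := by
    intro M N
    rw [PiLp.inner_apply]
    rw [Matrix.trace, Fintype.sum_prod_type]
    rw [Finset.sum_comm]
    refine Finset.sum_congr rfl fun j _ => ?_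
    refine Finset.sum_congr rfl fun i _ => ?_
    simp [Matrix.mul_apply, Matrix.diag, Matrix.conjTranspose_apply, RCLike.inner_apply,
      mul_comm]
  have h1 : (Aᴴ * B).trace = (inner ℂ a b : ℂ) := key A B
  have h2 : (Aᴴ * A).trace = (inner ℂ a a : ℂ) := key A A
  have h3 : (Bᴴ * B).trace = (inner ℂ b b : ℂ) := key B B
  rw [h1, h2, h3]
  calc ‖(inner ℂ a b : ℂ)‖ = ‖(inner ℂ a b : ℂ)‖ := rfl
    _ ≤ ‖a‖ * ‖b‖ := norm_inner_le_norm a b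
    _ = Real.sqrt ((inner ℂ a a : ℂ).re) * Real.sqrt ((inner ℂ b b : ℂ).re) := by
        rw [norm_eq_sqrt_re_inner (𝕜 := ℂ) a, norm_eq_sqrt_re_inner (𝕜 := ℂ) b]
        rfl

/-- The dual bound: `Re Tr (X V) ≤ ‖X‖₁` for `V` unitary. -/
lemma re_trace_mul_unitary_le (X V : Matrix n n ℂ) (hV : V ∈ Matrix.unitaryGroup n ℂ) :
    ((X * V).trace).re ≤ traceNorm X := by
  obtain ⟨W, hW, hXW⟩ := exists_polar X
  set S := (Matrix.posSemidef_conjTranspose_mul_self X).sqrt with hS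
  have hSpsd : S.PosSemidef := (Matrix.posSemidef_conjTranspose_mul_self X).posSemidef_sqrt
  set R := hSpsd.sqrt with hR
  have hRR : R * R = S := hSpsd.sqrt_mul_self
  have hRh : Rᴴ = R := hSpsd.posSemidef_sqrt.1
  set M := V * W with hM
  have hMunit : M ∈ Matrix.unitaryGroup n ℂ := mul_mem hV hW
  have htr : (X * V).trace = (Rᴴ * (R * M)).trace := by
    rw [hXW]
    calc (W * S * V).trace = (W * (S * V)).trace := by rw [Matrix.mul_assoc]
      _ = (S * V * W).trace := Matrix.trace_mul_comm W (S * V)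
      _ = (R * R * V * W).trace := by rw [hRR]
      _ = (Rᴴ * (R * M)).trace := by rw [hRh, hM, Matrix.mul_assoc, Matrix.mul_assoc]
  have hcs := abs_trace_conjTranspose_mul_le R (R * M)
  have e1 : (Rᴴ * R).trace = S.trace := by rw [hRh, hRR]
  have e2 : ((R * M)ᴴ * (R * M)).trace = S.trace := by
    have : (R * M)ᴴ * (R * M) = Mᴴ * (S * M) := by
      rw [Matrix.conjTranspose_mul, hRh]
      rw [Matrix.mul_assoc, ← Matrix.mul_assoc R R M, hRR]
    rw [this, Matrix.trace_mul_comm, Matrix.mul_assoc, ← Matrix.star_eq_conjTranspose,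
      (Matrix.mem_unitaryGroup_iff.mp hMunit), Matrix.mul_one]
  rw [e1, e2] at hcs
  have hnn : 0 ≤ S.trace.re := psd_trace_re_nonneg hSpsd
  calc ((X * V).trace).re ≤ ‖(X * V).trace‖ := Complex.re_le_norm _
    _ = ‖(Rᴴ * (R * M)).trace‖ := by rw [htr]
    _ ≤ Real.sqrt (S.trace.re) * Real.sqrt (S.trace.re) := hcs
    _ = S.trace.re := Real.mul_self_sqrt hnn
    _ = traceNorm X := rfl

/-- There is a unitary attaining the trace norm. -/
lemma exists_unitary_re_trace_eq (X : Matrix n n ℂ) :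
    ∃ V ∈ Matrix.unitaryGroup n ℂ, ((X * V).trace).re = traceNorm X := by
  obtain ⟨W, hW, hXW⟩ := exists_polar X
  refine ⟨star W, Unitary.star_mem hW, ?_⟩
  have : X * star W = W * (Matrix.posSemidef_conjTranspose_mul_self X).sqrt * star W := by
    rw [← hXW]
  rw [this, Matrix.trace_mul_comm, ← Matrix.mul_assoc]
  rw [show star W * W = 1 from Matrix.mem_unitaryGroup_iff'.mp hW, Matrix.one_mul]
  rfl

/-- Triangle inequality for the trace norm. -/
lemma traceNorm_add_le (X Y : Matrix n n ℂ) :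
    traceNorm (X + Y) ≤ traceNorm X + traceNorm Y := by
  obtain ⟨V, hV, hXY⟩ := exists_unitary_re_trace_eq (X + Y)
  rw [← hXY, Matrix.add_mul, Matrix.trace_add, Complex.add_re]
  exact add_le_add (re_trace_mul_unitary_le X V hV) (re_trace_mul_unitary_le Y V hV)

/-- `outer`-style rank one matrix. -/
def rankOne {m' : Type*} [Fintype m'] (u v : EuclideanSpace ℂ m') : Matrix m' m' ℂ :=
  Matrix.of fun i j => u i * star (v j)

lemma traceNorm_rankOne_le (u v : EuclideanSpace ℂ n) :
    traceNorm (rankOne u v) ≤ ‖u‖ * ‖v‖ := by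
  obtain ⟨V, hV, hX⟩ := exists_unitary_re_trace_eq (rankOne u v)
  rw [← hX]
  set w : EuclideanSpace ℂ n := (WithLp.equiv 2 _).symm (V *ᵥ (u : n → ℂ)) with hw
  have htr : ((rankOne u v) * V).trace = (inner ℂ v w : ℂ) := by
    rw [Matrix.trace, PiLp.inner_apply]
    have hwx : ∀ x, (w : n → ℂ) x = ∑ j, V x j * u j := fun x => rfl
    calc ∑ i, (rankOne u v * V).diag i
        = ∑ i, ∑ x, u i * star (v x) * V x i := by
          refine Finset.sum_congr rfl fun i _ => ?_
          simp [Matrix.diag, Matrix.mul_apply, rankOne]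
      _ = ∑ x, ∑ i, u i * star (v x) * V x i := Finset.sum_comm
      _ = ∑ x, inner ℂ (v x) (w x) := by
          refine Finset.sum_congr rfl fun x _ => ?_
          simp only [RCLike.inner_apply']
          rw [hwx x, Finset.mul_sum]
          refine Finset.sum_congr rfl fun i _ => ?_
          simp only [Complex.star_def]
          ring
  have hww : (inner ℂ w w : ℂ) = (inner ℂ u u : ℂ) := by
    have h0 := inner_toEuclideanLin_conjTranspose (Vᴴ) u u
    rw [conjTranspose_conjTranspose] at h0
    have hwe : Matrix.toEuclideanLin V u = w := rfl
    rw [hwe] at h0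
    rw [h0, show Vᴴ * V = 1 from by
      rw [← Matrix.star_eq_conjTranspose]; exact Matrix.mem_unitaryGroup_iff'.mp hV]
    rw [Matrix.one_mulVec]
    exact dotProduct_comm _ _
  have hnw : ‖w‖ = ‖u‖ := by
    rw [norm_eq_sqrt_re_inner (𝕜 := ℂ) w, norm_eq_sqrt_re_inner (𝕜 := ℂ) u, hww]
  calc ((rankOne u v * V).trace).re = ((inner ℂ v w : ℂ)).re := by rw [htr]
    _ ≤ ‖(inner ℂ v w : ℂ)‖ := Complex.re_le_norm _
    _ = ‖(inner ℂ v w : ℂ)‖ := rfl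
    _ ≤ ‖v‖ * ‖w‖ := norm_inner_le_norm v w
    _ = ‖u‖ * ‖v‖ := by rw [hnw, mul_comm]
/-- For any unitary `V`, the sum of the absolute values of the diagonal entries of `Vᴴ Δ V`
is at most the trace norm of `Δ`. -/
lemma sum_abs_diag_conj_le (Δ V : Matrix n n ℂ) (hV : V ∈ Matrix.unitaryGroup n ℂ) :
    ∑ i, ‖(star V * Δ * V) i i‖ ≤ traceNorm Δ := by
  set M := star V * Δ * V with hM
  set p : n → ℂ := fun i => if M i i = 0 then 1
    else (starRingEnd ℂ) (M i i) / (‖M i i‖ : ℂ) with hp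
  have habs : ∀ i, M i i * p i = (‖M i i‖ : ℂ) := by
    intro i
    by_cases h : M i i = 0
    · simp [hp, h]
    · have hne : (‖M i i‖ : ℂ) ≠ 0 :=
        Complex.ofReal_ne_zero.mpr (norm_ne_zero_iff.mpr h)
      rw [hp]
      simp only [if_neg h]
      rw [mul_div_assoc', Complex.mul_conj, div_eq_iff hne, Complex.normSq_eq_norm_sq]
      push_cast
      ring
  have hstarp : ∀ i, star (p i) * p i = 1 := by
    intro i
    have h1 : star (p i) * p i = ((Complex.normSq (p i) : ℝ) : ℂ) := by
      rw [Complex.star_def, mul_comm, Complex.mul_conj]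
    rw [h1]
    by_cases h : M i i = 0
    · simp [hp, h]
    · have hne : ‖M i i‖ ≠ 0 := norm_ne_zero_iff.mpr h
      rw [hp]
      simp only [if_neg h]
      rw [Complex.normSq_div, Complex.normSq_conj, Complex.normSq_ofReal,
        Complex.normSq_eq_norm_sq]
      have e : ‖M i i‖ ^ 2 / (‖M i i‖ * ‖M i i‖) = 1 := by
        rw [pow_two]; exact div_self (mul_ne_zero hne hne)
      rw [e, Complex.ofReal_one]
  have hpunit : Matrix.diagonal p ∈ Matrix.unitaryGroup n ℂ := by
    rw [Matrix.mem_unitaryGroup_iff', Matrix.star_eq_conjTranspose,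
      Matrix.diagonal_conjTranspose, Matrix.diagonal_mul_diagonal]
    have h2 : (fun i => (star p) i * p i) = fun _ => (1 : ℂ) :=
      funext fun i => hstarp i
    rw [h2, Matrix.diagonal_one]
  have hW : V * Matrix.diagonal p * star V ∈ Matrix.unitaryGroup n ℂ :=
    mul_mem (mul_mem hV hpunit) (Unitary.star_mem hV)
  have htr : (Δ * (V * Matrix.diagonal p * star V)).trace = (M * Matrix.diagonal p).trace := by
    calc (Δ * (V * Matrix.diagonal p * star V)).trace
        = ((Δ * V * Matrix.diagonal p) * star V).trace := by
          simp only [Matrix.mul_assoc]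
      _ = (star V * (Δ * V * Matrix.diagonal p)).trace := Matrix.trace_mul_comm _ _
      _ = (M * Matrix.diagonal p).trace := by
          rw [hM]; simp only [Matrix.mul_assoc]
  have hdiag : (M * Matrix.diagonal p).trace = ∑ i, (‖M i i‖ : ℂ) := by
    rw [Matrix.trace]
    refine Finset.sum_congr rfl fun i _ => ?_
    rw [Matrix.diag]
    rw [Matrix.mul_diagonal]
    exact habs i
  have hle := re_trace_mul_unitary_le Δ _ hW
  rw [htr, hdiag] at hle
  calc ∑ i, ‖M i i‖ = (∑ i, (‖M i i‖ : ℂ)).re := by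
        rw [Complex.re_sum]
        exact (Finset.sum_congr rfl fun i _ => (Complex.ofReal_re _).symm)
    _ ≤ traceNorm Δ := hle

/-- Powers–Størmer inequality: `Tr ((√ρ₁ - √ρ₂)²) ≤ ‖ρ₁ - ρ₂‖₁`. -/
lemma powers_stormer {ρ₁ ρ₂ : Matrix n n ℂ} (h₁ : ρ₁.PosSemidef) (h₂ : ρ₂.PosSemidef) :
    (((h₁.sqrt - h₂.sqrt) * (h₁.sqrt - h₂.sqrt)).trace).re ≤ traceNorm (ρ₁ - ρ₂) := by
  set S₁ := h₁.sqrt with hS₁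
  set S₂ := h₂.sqrt with hS₂
  have hS₁p : S₁.PosSemidef := h₁.posSemidef_sqrt
  have hS₂p : S₂.PosSemidef := h₂.posSemidef_sqrt
  have m₁ : S₁ * S₁ = ρ₁ := by rw [hS₁]; exact h₁.sqrt_mul_self
  have m₂ : S₂ * S₂ = ρ₂ := by rw [hS₂]; exact h₂.sqrt_mul_self
  set C := S₁ - S₂ with hCdef
  have hCh : C.IsHermitian := hS₁p.1.sub hS₂p.1
  set Vm : Matrix n n ℂ := (hCh.eigenvectorUnitary : Matrix n n ℂ) with hVm
  have hVu : Vm ∈ Matrix.unitaryGroup n ℂ := hCh.eigenvectorUnitary.2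
  have hVsV : star Vm * Vm = 1 := Matrix.mem_unitaryGroup_iff'.mp hVu
  set lam := hCh.eigenvalues with hlam
  set d : Matrix n n ℂ := Matrix.diagonal (RCLike.ofReal ∘ lam) with hd
  have hspec : C = Vm * d * star Vm := hCh.spectral_theorem
  have key1 : star Vm * C = d * star Vm := by
    rw [hspec, ← Matrix.mul_assoc, ← Matrix.mul_assoc, hVsV, Matrix.one_mul]
  have key2 : C * Vm = Vm * d := by
    rw [hspec, Matrix.mul_assoc, hVsV, Matrix.mul_one]
  set D := S₁ + S₂ with hDdef
  set N := star Vm * D * Vm with hN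
  have hconj : ∀ (X : Matrix n n ℂ), X.PosSemidef → (star Vm * X * Vm).PosSemidef := by
    intro X hX
    have h0 := hX.mul_mul_conjTranspose_same (star Vm)
    have hsv : (star Vm)ᴴ = Vm := by
      rw [← Matrix.star_eq_conjTranspose, star_star]
    rwa [hsv] at h0
  have hc : star Vm * C * Vm = d := by
    rw [key1, Matrix.mul_assoc, hVsV, Matrix.mul_one]
  have hNdpsd : (N + d).PosSemidef := by
    have e2 : star Vm * (D + C) * Vm = N + d := by
      rw [Matrix.mul_add, Matrix.add_mul, hc]
    have e3 : D + C = S₁ + S₁ := by rw [hDdef, hCdef]; abel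
    rw [← e2, e3]
    exact hconj _ (hS₁p.add hS₁p)
  have hNmdpsd : (N - d).PosSemidef := by
    have e2 : star Vm * (D - C) * Vm = N - d := by
      rw [Matrix.mul_sub, Matrix.sub_mul, hc]
    have e3 : D - C = S₂ + S₂ := by rw [hDdef, hCdef]; abel
    rw [← e2, e3]
    exact hconj _ (hS₂p.add hS₂p)
  have hdii : ∀ i, d i i = (lam i : ℂ) := fun i => Matrix.diagonal_apply_eq _ i
  have hdiagbd : ∀ i, |lam i| ≤ (N i i).re := by
    intro i
    have h1 := psd_diag_re_nonneg hNdpsd i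
    have h2 := psd_diag_re_nonneg hNmdpsd i
    rw [Matrix.add_apply, hdii i, Complex.add_re, Complex.ofReal_re] at h1
    rw [Matrix.sub_apply, hdii i, Complex.sub_re, Complex.ofReal_re] at h2
    rw [abs_le]; constructor <;> linarith
  set M := star Vm * (ρ₁ - ρ₂) * Vm with hMdef
  have hCD : C * D + D * C = (ρ₁ - ρ₂) + (ρ₁ - ρ₂) := by
    have e : C * D + D * C = S₁ * S₁ + S₁ * S₁ - S₂ * S₂ - S₂ * S₂ := by
      rw [hCdef, hDdef]; noncomm_ring
    rw [e, m₁, m₂]; abel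
  have hMsum : M + M = d * N + N * d := by
    have e1 : star Vm * (C * D) * Vm = d * N := by
      calc star Vm * (C * D) * Vm = (star Vm * C) * (D * Vm) := by
            simp only [Matrix.mul_assoc]
        _ = d * N := by rw [key1, hN]; simp only [Matrix.mul_assoc]
    have e2 : star Vm * (D * C) * Vm = N * d := by
      calc star Vm * (D * C) * Vm = (star Vm * D) * (C * Vm) := by
            simp only [Matrix.mul_assoc]
        _ = (star Vm * D) * (Vm * d) := by rw [key2]
        _ = N * d := by rw [hN]; simp only [Matrix.mul_assoc]
    calc M + M = star Vm * ((ρ₁ - ρ₂) + (ρ₁ - ρ₂)) * Vm := by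
          rw [Matrix.mul_add, Matrix.add_mul, hMdef]
      _ = star Vm * (C * D + D * C) * Vm := by rw [hCD]
      _ = star Vm * (C * D) * Vm + star Vm * (D * C) * Vm := by
          rw [Matrix.mul_add, Matrix.add_mul]
      _ = d * N + N * d := by rw [e1, e2]
  have hMii : ∀ i, M i i = (lam i : ℂ) * N i i := by
    intro i
    have h0 : (M + M) i i = (d * N + N * d) i i := by rw [hMsum]
    rw [Matrix.add_apply, Matrix.add_apply] at h0
    rw [show (d * N) i i = (lam i : ℂ) * N i i from by
          rw [hd, Matrix.diagonal_mul]; rfl,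
        show (N * d) i i = N i i * (lam i : ℂ) from by
          rw [hd, Matrix.mul_diagonal]; rfl] at h0
    have h2 : (2 : ℂ) * M i i = (2 : ℂ) * ((lam i : ℂ) * N i i) := by
      linear_combination h0
    exact mul_left_cancel₀ two_ne_zero h2
  have hCC : (C * C).trace = ∑ i, ((lam i : ℂ) * (lam i : ℂ)) := by
    have e : C * C = Vm * (d * d) * star Vm := by
      rw [hspec]
      calc Vm * d * star Vm * (Vm * d * star Vm)
          = Vm * (d * ((star Vm * Vm) * (d * star Vm))) := by
            simp only [Matrix.mul_assoc]
        _ = Vm * (d * d) * star Vm := by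
            rw [hVsV, Matrix.one_mul]; simp only [Matrix.mul_assoc]
    rw [e, Matrix.mul_assoc, Matrix.trace_mul_comm, Matrix.mul_assoc, hVsV, Matrix.mul_one]
    rw [hd, Matrix.diagonal_mul_diagonal, Matrix.trace_diagonal]
    rfl
  have hre : ((C * C).trace).re = ∑ i, lam i * lam i := by
    rw [hCC, Complex.re_sum]
    refine Finset.sum_congr rfl fun i _ => ?_
    rw [← Complex.ofReal_mul, Complex.ofReal_re]
  calc ((C * C).trace).re = ∑ i, lam i * lam i := hre
    _ ≤ ∑ i, ‖M i i‖ := by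
        refine Finset.sum_le_sum fun i _ => ?_
        have h1 : |lam i| ≤ (N i i).re := hdiagbd i
        have h2 : (N i i).re ≤ ‖N i i‖ := Complex.re_le_norm _
        have h3 : ‖M i i‖ = |lam i| * ‖N i i‖ := by
          rw [hMii i, norm_mul, Complex.norm_real, Real.norm_eq_abs]
        have h4 : lam i * lam i = |lam i| * |lam i| := (abs_mul_abs_self (lam i)).symm
        nlinarith [abs_nonneg (lam i)]
    _ ≤ traceNorm (ρ₁ - ρ₂) := sum_abs_diag_conj_le (ρ₁ - ρ₂) Vm hVu

section blk

variable {dH dK : ℕ}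

/-- Embedding of a `dH × dH` matrix as a `dH × dK` matrix by padding with zero columns. -/
def blk (dK : ℕ) (X : Matrix (Fin dH) (Fin dH) ℂ) : Matrix (Fin dH) (Fin dK) ℂ :=
  Matrix.of fun i j => if h : (j : ℕ) < dH then X i ⟨j, h⟩ else 0

lemma sum_blk (hdim : dH ≤ dK) (g : Fin dH → ℂ) :
    ∑ j : Fin dK, (if h : (j : ℕ) < dH then g ⟨j, h⟩ else 0) = ∑ i, g i := by
  have h1 : ∑ j : Fin dK, (if h : (j : ℕ) < dH then g ⟨j, h⟩ else 0)
      = ∑ j ∈ Finset.range dK, (if h : j < dH then g ⟨j, h⟩ else 0) :=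
    Fin.sum_univ_eq_sum_range (fun j => if h : j < dH then g ⟨j, h⟩ else 0) dK
  have h2 : ∑ i : Fin dH, g i
      = ∑ j ∈ Finset.range dH, (if h : j < dH then g ⟨j, h⟩ else 0) := by
    rw [← Fin.sum_univ_eq_sum_range (fun j => if h : j < dH then g ⟨j, h⟩ else 0) dH]
    refine Finset.sum_congr rfl fun j _ => ?_
    rw [dif_pos j.isLt]
  rw [h1, h2]
  refine (Finset.sum_subset (Finset.range_subset_range.mpr hdim) fun x _ hx => ?_).symm
  rw [dif_neg (by simpa using hx)]

lemma blk_mul_conjTranspose_blk (hdim : dH ≤ dK) (X Y : Matrix (Fin dH) (Fin dH) ℂ) :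
    blk dK X * (blk dK Y)ᴴ = X * Yᴴ := by
  ext i i'
  rw [Matrix.mul_apply, Matrix.mul_apply]
  have h0 : ∀ j : Fin dK, blk dK X i j * (blk dK Y)ᴴ j i'
      = (if h : (j : ℕ) < dH then X i ⟨j, h⟩ * (starRingEnd ℂ) (Y i' ⟨j, h⟩) else 0) := by
    intro j
    by_cases h : (j : ℕ) < dH <;>
      simp [blk, Matrix.conjTranspose_apply, h, Complex.star_def]
  rw [Finset.sum_congr rfl fun j _ => h0 j,
    sum_blk hdim (fun t => X i t * (starRingEnd ℂ) (Y i' t))]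
  refine Finset.sum_congr rfl fun t _ => ?_
  rw [Matrix.conjTranspose_apply, Complex.star_def]

lemma inner_eq_trace (ψ χ : EuclideanSpace ℂ (Fin dH × Fin dK)) :
    (inner ℂ ψ χ : ℂ)
      = ((Matrix.of fun i j => χ (i, j)) * (Matrix.of fun i j => ψ (i, j))ᴴ).trace := by
  rw [PiLp.inner_apply, Matrix.trace, Fintype.sum_prod_type]
  refine Finset.sum_congr rfl fun i _ => ?_
  rw [show ((Matrix.of fun i j => χ (i, j)) * (Matrix.of fun i j => ψ (i, j))ᴴ).diag i
      = ∑ j, χ (i, j) * (starRingEnd ℂ) (ψ (i, j)) from by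
    simp [Matrix.diag, Matrix.mul_apply, Matrix.conjTranspose_apply, Complex.star_def]]
  refine Finset.sum_congr rfl fun j _ => ?_
  rw [RCLike.inner_apply]

end blk

end LTaux

end LT_Aux

/-- Local transition theorem. -/
theorem local_transition {dH dK : ℕ} (hdim : dH ≤ dK)
    (ρ₁ ρ₂ : Matrix (Fin dH) (Fin dH) ℂ)
    (hρ₁ : ρ₁.PosSemidef) (hρ₂ : ρ₂.PosSemidef)
    (htr₁ : ρ₁.trace = 1) (htr₂ : ρ₂.trace = 1)
    (φ₁ φ₂ : EuclideanSpace ℂ (Fin dH × Fin dK))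
    (hn₁ : ‖φ₁‖ = 1) (hn₂ : ‖φ₂‖ = 1)
    (hpur₁ : reducedH φ₁ = ρ₁) (hpur₂ : reducedH φ₂ = ρ₂) :
    ∃ U ∈ Matrix.unitaryGroup (Fin dK) ℂ,
      traceNorm (outer φ₁ - outer (applyOnK U φ₂))
        ≤ 2 * traceNorm (ρ₁ - ρ₂) ^ ((1 : ℝ) / 2) := by
  classical
  set A₁ : Matrix (Fin dH) (Fin dK) ℂ := Matrix.of fun i j => φ₁ (i, j) with hA₁def
  set A₂ : Matrix (Fin dH) (Fin dK) ℂ := Matrix.of fun i j => φ₂ (i, j) with hA₂def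
  have hA₁ : A₁ * A₁ᴴ = ρ₁ := by
    rw [← hpur₁]; ext i i'
    simp [hA₁def, Matrix.mul_apply, reducedH, Matrix.conjTranspose_apply]
  have hA₂ : A₂ * A₂ᴴ = ρ₂ := by
    rw [← hpur₂]; ext i i'
    simp [hA₂def, Matrix.mul_apply, reducedH, Matrix.conjTranspose_apply]
  set S₁ := hρ₁.sqrt with hS₁def
  set S₂ := hρ₂.sqrt with hS₂def
  have hS₁h : S₁ᴴ = S₁ := hρ₁.posSemidef_sqrt.1
  have hS₂h : S₂ᴴ = S₂ := hρ₂.posSemidef_sqrt.1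
  have m₁ : S₁ * S₁ = ρ₁ := by rw [hS₁def]; exact hρ₁.sqrt_mul_self
  have m₂ : S₂ * S₂ = ρ₂ := by rw [hS₂def]; exact hρ₂.sqrt_mul_self
  have hB₁ : A₁ * A₁ᴴ = LTaux.blk dK S₁ * (LTaux.blk dK S₁)ᴴ := by
    rw [LTaux.blk_mul_conjTranspose_blk hdim, hS₁h, m₁, hA₁]
  have hB₂ : A₂ * A₂ᴴ = LTaux.blk dK S₂ * (LTaux.blk dK S₂)ᴴ := by
    rw [LTaux.blk_mul_conjTranspose_blk hdim, hS₂h, m₂, hA₂]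
  obtain ⟨U₁, hU₁, hBU₁⟩ := LTaux.exists_unitary_mul_eq A₁ (LTaux.blk dK S₁) hB₁
  obtain ⟨U₂, hU₂, hBU₂⟩ := LTaux.exists_unitary_mul_eq A₂ (LTaux.blk dK S₂) hB₂
  set U : Matrix (Fin dK) (Fin dK) ℂ := (star U₂ * U₁)ᵀ with hUdef
  have hmm : star U₂ * U₁ ∈ Matrix.unitaryGroup (Fin dK) ℂ :=
    mul_mem (Unitary.star_mem hU₂) hU₁
  have hUmem : U ∈ Matrix.unitaryGroup (Fin dK) ℂ := by
    rw [Matrix.mem_unitaryGroup_iff]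
    have hstt : star ((star U₂ * U₁)ᵀ) = (star (star U₂ * U₁))ᵀ := by
      ext a b
      rfl
    rw [hUdef, hstt, ← Matrix.transpose_mul, Matrix.mem_unitaryGroup_iff'.mp hmm,
      Matrix.transpose_one]
  refine ⟨U, hUmem, ?_⟩
  set φ₂' := applyOnK U φ₂ with hφ₂'def
  set A₂' : Matrix (Fin dH) (Fin dK) ℂ := Matrix.of fun i j => φ₂' (i, j) with hA₂'def
  have hA₂'eq : A₂' = LTaux.blk dK S₂ * U₁ := by
    have h1 : A₂' = A₂ * Uᵀ := by
      ext i j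
      rw [Matrix.mul_apply]
      show φ₂' (i, j) = _
      rw [hφ₂'def]
      show (∑ j', U j j' * φ₂ (i, j')) = _
      refine Finset.sum_congr rfl fun j' _ => ?_
      rw [hUdef, Matrix.transpose_transpose]
      show (star U₂ * U₁)ᵀ j j' * φ₂ (i, j') = A₂ i j' * (star U₂ * U₁) j' j
      rw [Matrix.transpose_apply]
      show (star U₂ * U₁) j' j * φ₂ (i, j') = A₂ i j' * (star U₂ * U₁) j' j
      rw [mul_comm]
      rfl
    rw [h1, hUdef, Matrix.transpose_transpose, ← hBU₂, Matrix.mul_assoc,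
      ← Matrix.mul_assoc U₂ (star U₂) U₁, Matrix.mem_unitaryGroup_iff.mp hU₂, Matrix.one_mul]
  have hcancel : ∀ (P Q : Matrix (Fin dH) (Fin dK) ℂ),
      (P * U₁) * (Q * U₁)ᴴ = P * Qᴴ := by
    intro P Q
    rw [Matrix.conjTranspose_mul, ← Matrix.mul_assoc, Matrix.mul_assoc P U₁,
      ← Matrix.star_eq_conjTranspose, Matrix.mem_unitaryGroup_iff.mp hU₁, Matrix.mul_one]
  have hovl : (inner ℂ φ₁ φ₂' : ℂ) = (S₂ * S₁).trace := by
    rw [LTaux.inner_eq_trace φ₁ φ₂']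
    have : (Matrix.of fun i j => φ₂' (i, j)) = A₂' := rfl
    rw [this, show (Matrix.of fun i j => φ₁ (i, j)) = A₁ from rfl]
    rw [hA₂'eq, ← hBU₁, hcancel, LTaux.blk_mul_conjTranspose_blk hdim, hS₁h]
  have hovl2 : (inner ℂ φ₂' φ₂' : ℂ) = ρ₂.trace := by
    rw [LTaux.inner_eq_trace φ₂' φ₂']
    rw [show (Matrix.of fun i j => φ₂' (i, j)) = A₂' from rfl]
    rw [hA₂'eq, hcancel, LTaux.blk_mul_conjTranspose_blk hdim, hS₂h, m₂]
  have hn₂' : ‖φ₂'‖ = 1 := by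
    have h0 := norm_sq_eq_re_inner (𝕜 := ℂ) φ₂'
    rw [hovl2, htr₂] at h0
    have h1 : ‖φ₂'‖ ^ 2 = 1 := by rw [h0]; rfl
    nlinarith [norm_nonneg φ₂']
  have hre1 : RCLike.re (inner ℂ φ₁ φ₁ : ℂ) = 1 := by
    rw [← norm_sq_eq_re_inner (𝕜 := ℂ) φ₁, hn₁]; norm_num
  have hre2 : RCLike.re (inner ℂ φ₂' φ₂' : ℂ) = 1 := by
    rw [← norm_sq_eq_re_inner (𝕜 := ℂ) φ₂', hn₂']; norm_num
  have hdiff : ‖φ₁ - φ₂'‖ ^ 2 = 2 - 2 * ((S₂ * S₁).trace).re := by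
    rw [norm_sq_eq_re_inner (𝕜 := ℂ) (φ₁ - φ₂'), inner_sub_sub_self]
    have hconj : RCLike.re (inner ℂ φ₂' φ₁ : ℂ) = RCLike.re (inner ℂ φ₁ φ₂' : ℂ) := by
      rw [← inner_conj_symm φ₂' φ₁]
      exact Complex.conj_re _
    simp only [map_sub, map_add]
    rw [hre1, hre2, hconj, hovl]
    show 1 - ((S₂ * S₁).trace).re - ((S₂ * S₁).trace).re + 1 = _
    ring
  have hPS := LTaux.powers_stormer hρ₁ hρ₂
  have hexpand : (((hρ₁.sqrt - hρ₂.sqrt) * (hρ₁.sqrt - hρ₂.sqrt)).trace).re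
      = 2 - 2 * ((S₂ * S₁).trace).re := by
    have e : (S₁ - S₂) * (S₁ - S₂) = S₁ * S₁ + S₂ * S₂ - S₁ * S₂ - S₂ * S₁ := by
      noncomm_ring
    rw [show hρ₁.sqrt = S₁ from rfl, show hρ₂.sqrt = S₂ from rfl]
    rw [e, m₁, m₂]
    rw [Matrix.trace_sub, Matrix.trace_sub, Matrix.trace_add]
    rw [htr₁, htr₂]
    have hcomm : (S₁ * S₂).trace = (S₂ * S₁).trace := Matrix.trace_mul_comm S₁ S₂
    rw [hcomm]
    simp only [Complex.sub_re, Complex.add_re, Complex.one_re]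
    ring
  have hd2 : ‖φ₁ - φ₂'‖ ^ 2 ≤ traceNorm (ρ₁ - ρ₂) := by
    rw [hdiff, ← hexpand]; exact hPS
  have hsplit : outer φ₁ - outer φ₂'
      = LTaux.rankOne φ₁ (φ₁ - φ₂') + LTaux.rankOne (φ₁ - φ₂') φ₂' := by
    ext p q
    have hsub : ∀ r, (φ₁ - φ₂') r = φ₁ r - φ₂' r := fun r => rfl
    simp only [outer, LTaux.rankOne, Matrix.sub_apply, Matrix.add_apply, Matrix.of_apply,
      hsub, Complex.star_def, map_sub]
    ring
  have htri : traceNorm (outer φ₁ - outer φ₂')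
      ≤ ‖φ₁‖ * ‖φ₁ - φ₂'‖ + ‖φ₁ - φ₂'‖ * ‖φ₂'‖ := by
    rw [hsplit]
    exact (LTaux.traceNorm_add_le _ _).trans
      (add_le_add (LTaux.traceNorm_rankOne_le _ _) (LTaux.traceNorm_rankOne_le _ _))
  have hfin : ‖φ₁ - φ₂'‖ ≤ Real.sqrt (traceNorm (ρ₁ - ρ₂)) := by
    have := Real.sqrt_le_sqrt hd2
    rwa [Real.sqrt_sq (norm_nonneg _)] at this
  calc traceNorm (outer φ₁ - outer φ₂') ≤ ‖φ₁‖ * ‖φ₁ - φ₂'‖ + ‖φ₁ - φ₂'‖ * ‖φ₂'‖ := htri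
    _ = 2 * ‖φ₁ - φ₂'‖ := by rw [hn₁, hn₂']; ring
    _ ≤ 2 * Real.sqrt (traceNorm (ρ₁ - ρ₂)) := by linarith
    _ = 2 * traceNorm (ρ₁ - ρ₂) ^ ((1 : ℝ) / 2) := by rw [Real.sqrt_eq_rpow]
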